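/- arXiv:1811.06201 — 5 statements merged into one kernel-verified Lean document; each statement's English description precedes it below -/
import Mathlib

section
/- Let q be an odd prime power and γ₁, γ₂ ∈ GF(q²)\{0} with γ₁γ̄₂ − γ̄₁γ₂ ≠ 0. There exists c ∈ GF(q²)\{0} and r ∈ GF(q)\{0} satisfying both (cγ̄₁ + c̄γ₁)² = 4γ₁γ̄₁r and (cγ̄₂ + c̄γ₂)² = 4γ₂γ̄₂r if and only if γ₁γ₂ is a square in GF(q²). Moreover, when γ₁γ₂ is a square, the set of such c is exactly {c : c² γ̄₁γ̄₂ ∈ GF(q)\{0}}, and there are exactly 2(q−1) pairs (c,r). -/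
/-- Common tangent circles of the two lines γ̄₁z + γ₁z̄ = 0 and γ̄₂z + γ₂z̄ = 0:
a pair (c,r) with c ≠ 0, r ∈ GF(q)\{0} satisfying both tangency conditions
exists iff γ₁γ₂ is a square in GF(q²); in that case the admissible c are
exactly those with c²γ̄₁γ̄₂ ∈ GF(q)\{0}, and there are exactly 2(q−1) pairs. -/
theorem stmt_8 (p m q : ℕ) (hp : p.Prime) (hp2 : p ≠ 2) (hm : m ≠ 0)
    (hq : q = p ^ m)
    (K : Type) [Field K] [Fintype K] (hK : Fintype.card K = q ^ 2)
    (γ₁ γ₂ : K) (h1 : γ₁ ≠ 0) (h2 : γ₂ ≠ 0)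
    (hd : γ₁ * γ₂ ^ q - γ₁ ^ q * γ₂ ≠ 0) :
    ((∃ c r : K, c ≠ 0 ∧ r ^ q = r ∧ r ≠ 0 ∧
        (c * γ₁ ^ q + c ^ q * γ₁) ^ 2 = 4 * (γ₁ * γ₁ ^ q) * r ∧
        (c * γ₂ ^ q + c ^ q * γ₂) ^ 2 = 4 * (γ₂ * γ₂ ^ q) * r)
      ↔ IsSquare (γ₁ * γ₂)) ∧
    (IsSquare (γ₁ * γ₂) →
      (∀ c : K,
        (∃ r : K, r ^ q = r ∧ r ≠ 0 ∧
          (c * γ₁ ^ q + c ^ q * γ₁) ^ 2 = 4 * (γ₁ * γ₁ ^ q) * r ∧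
          (c * γ₂ ^ q + c ^ q * γ₂) ^ 2 = 4 * (γ₂ * γ₂ ^ q) * r)
        ↔ ((c ^ 2 * (γ₁ ^ q * γ₂ ^ q)) ^ q = c ^ 2 * (γ₁ ^ q * γ₂ ^ q) ∧
            c ^ 2 * (γ₁ ^ q * γ₂ ^ q) ≠ 0)) ∧
      Nat.card {x : K × K | x.1 ≠ 0 ∧ x.2 ^ q = x.2 ∧ x.2 ≠ 0 ∧
        (x.1 * γ₁ ^ q + x.1 ^ q * γ₁) ^ 2 = 4 * (γ₁ * γ₁ ^ q) * x.2 ∧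
        (x.1 * γ₂ ^ q + x.1 ^ q * γ₂) ^ 2 = 4 * (γ₂ * γ₂ ^ q) * x.2} =
          2 * (q - 1)) := by
  have hp' : Fact p.Prime := ⟨hp⟩
  have hq0 : q ≠ 0 := by simpa [hq] using pow_ne_zero m hp.pos.ne'
  have hq3 : 3 ≤ q := by
    have h3p : 3 ≤ p := by have := hp.two_le; omega
    calc 3 ≤ p := h3p
      _ ≤ p ^ m := Nat.le_self_pow hm p
      _ = q := hq.symm
  have hqodd : Odd q := by rw [hq]; exact (hp.odd_of_ne_two hp2).pow
  -- characteristic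
  obtain ⟨p', hc⟩ := CharP.exists K
  haveI := hc
  obtain ⟨n, hp'', hcard⟩ := FiniteField.card K p'
  have hpp : p' = p := by
    have hdvd : p' ∣ q ^ 2 := by
      rw [← hK, hcard]; exact dvd_pow_self p' n.pos.ne'
    rw [hq, ← pow_mul] at hdvd
    exact (Nat.prime_dvd_prime_iff_eq hp'' hp).mp (hp''.dvd_of_dvd_pow hdvd)
  rw [hpp] at hc
  haveI : CharP K p := hc
  have hchar2 : ringChar K ≠ 2 := by rw [ringChar.eq K p]; exact hp2
  -- Frobenius facts
  have hφ : ∀ x : K, (iterateFrobenius K p m) x = x ^ q := fun x => by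
    rw [iterateFrobenius_def, hq]
  have hadd : ∀ x y : K, (x + y) ^ q = x ^ q + y ^ q := fun x y => by
    rw [← hφ, ← hφ, ← hφ, map_add]
  have hQ : ∀ x : K, (x ^ q) ^ q = x := fun x => by
    rw [← pow_mul, ← pow_two, ← hK]
    exact FiniteField.pow_card x
  have h4q : (4 : K) ^ q = 4 := by rw [← hφ]; exact map_ofNat _ 4
  have h2K : (2 : K) ≠ 0 := by
    intro h
    have := (CharP.cast_eq_zero_iff K p 2).mp (by exact_mod_cast h)
    exact hp2 ((Nat.prime_dvd_prime_iff_eq hp Nat.prime_two).mp this)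
  have h4K : (4 : K) ≠ 0 := by
    have h42 : (4 : K) = 2 * 2 := by norm_num
    rw [h42]; exact mul_ne_zero h2K h2K
  have hb1 : γ₁ ^ q ≠ 0 := pow_ne_zero _ h1
  have hb2 : γ₂ ^ q ≠ 0 := pow_ne_zero _ h2
  have h4g : (4 : K) * (γ₁ * γ₁ ^ q) ≠ 0 := mul_ne_zero h4K (mul_ne_zero h1 hb1)
  -- nonzero fixed elements are squares
  have hsqfix : ∀ a : K, a ≠ 0 → a ^ q = a → IsSquare a := by
    intro a ha hfix
    rw [FiniteField.isSquare_iff hchar2 ha, hK]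
    have hpow : a ^ (q - 1) = 1 := by
      have h' : a ^ (q - 1) * a = 1 * a := by
        rw [one_mul, ← pow_succ, show q - 1 + 1 = q by omega]
        exact hfix
      exact mul_right_cancel₀ ha h'
    obtain ⟨k, hk⟩ := hqodd
    have e3 : q ^ 2 / 2 = (q - 1) * ((q + 1) / 2) := by
      have e1 : q ^ 2 = (2 * k + 1) ^ 2 := by rw [hk]
      have e2 : (2 * k + 1) ^ 2 = 2 * (2 * k * (k + 1)) + 1 := by ring
      have e4 : (q - 1) * ((q + 1) / 2) = 2 * k * (k + 1) := by
        rw [show q - 1 = 2 * k by omega, show (q + 1) / 2 = k + 1 by omega]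
      omega
    rw [e3, pow_mul, hpow, one_pow]
  -- the Frobenius of t = c²γ̄₁γ̄₂
  have ht : ∀ c : K, (c ^ 2 * (γ₁ ^ q * γ₂ ^ q)) ^ q = (c ^ q) ^ 2 * (γ₁ * γ₂) := by
    intro c
    rw [mul_pow, mul_pow, hQ, hQ, ← pow_mul, mul_comm 2 q, pow_mul]
  -- if t is fixed and c ≠ 0, the tangency numerator is nonzero
  have hNonzero : ∀ c : K, c ≠ 0 →
      (c ^ 2 * (γ₁ ^ q * γ₂ ^ q)) ^ q = c ^ 2 * (γ₁ ^ q * γ₂ ^ q) →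
      c * γ₁ ^ q + c ^ q * γ₁ ≠ 0 := by
    intro c hc hfix h0
    have key : (c ^ q) ^ 2 * (γ₁ * γ₂) = c ^ 2 * (γ₁ ^ q * γ₂ ^ q) := by
      rw [← ht c]; exact hfix
    have hsq : (c ^ q) ^ 2 * γ₁ ^ 2 = c ^ 2 * (γ₁ ^ q) ^ 2 := by
      linear_combination (c ^ q * γ₁ - c * γ₁ ^ q) * h0
    have hz : c ^ 2 * γ₁ ^ q * (γ₁ ^ q * γ₂ - γ₁ * γ₂ ^ q) = 0 := by
      linear_combination γ₁ * key - γ₂ * hsq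
    have h5 : γ₁ ^ q * γ₂ - γ₁ * γ₂ ^ q = 0 := by
      rcases mul_eq_zero.mp hz with h | h
      · exact absurd h (mul_ne_zero (pow_ne_zero _ hc) hb1)
      · exact h
    exact hd (by linear_combination -h5)
  -- backward construction: the explicit radius works
  have hback : ∀ c : K,
      (c ^ 2 * (γ₁ ^ q * γ₂ ^ q)) ^ q = c ^ 2 * (γ₁ ^ q * γ₂ ^ q) →
      c ^ 2 * (γ₁ ^ q * γ₂ ^ q) ≠ 0 →
      (((c * γ₁ ^ q + c ^ q * γ₁) ^ 2 / (4 * (γ₁ * γ₁ ^ q))) ^ q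
          = (c * γ₁ ^ q + c ^ q * γ₁) ^ 2 / (4 * (γ₁ * γ₁ ^ q)) ∧
        (c * γ₁ ^ q + c ^ q * γ₁) ^ 2 / (4 * (γ₁ * γ₁ ^ q)) ≠ 0 ∧
        (c * γ₁ ^ q + c ^ q * γ₁) ^ 2
          = 4 * (γ₁ * γ₁ ^ q) * ((c * γ₁ ^ q + c ^ q * γ₁) ^ 2 / (4 * (γ₁ * γ₁ ^ q))) ∧
        (c * γ₂ ^ q + c ^ q * γ₂) ^ 2
          = 4 * (γ₂ * γ₂ ^ q) * ((c * γ₁ ^ q + c ^ q * γ₁) ^ 2 / (4 * (γ₁ * γ₁ ^ q)))) := by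
    intro c hfix hne
    have hc : c ≠ 0 := by
      intro h; apply hne; rw [h]; ring
    have hN : c * γ₁ ^ q + c ^ q * γ₁ ≠ 0 := hNonzero c hc hfix
    have key : (c ^ q) ^ 2 * (γ₁ * γ₂) = c ^ 2 * (γ₁ ^ q * γ₂ ^ q) := by
      rw [← ht c]; exact hfix
    have hNfix : (c * γ₁ ^ q + c ^ q * γ₁) ^ q = c * γ₁ ^ q + c ^ q * γ₁ := by
      rw [hadd, mul_pow, mul_pow, hQ, hQ]; ring
    have hDfix : (4 * (γ₁ * γ₁ ^ q)) ^ q = 4 * (γ₁ * γ₁ ^ q) := by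
      rw [mul_pow, mul_pow, hQ, h4q]; ring
    refine ⟨?_, div_ne_zero (pow_ne_zero _ hN) h4g, ?_, ?_⟩
    · rw [div_pow, pow_right_comm, hNfix, hDfix]
    · field_simp
    · rw [← mul_div_assoc, eq_div_iff h4g]
      linear_combination (4 * (γ₁ ^ q * γ₂ - γ₁ * γ₂ ^ q)) * key
  -- forward: any solution forces t fixed and the radius formula
  have hfor : ∀ c r : K, r ≠ 0 →
      (c * γ₁ ^ q + c ^ q * γ₁) ^ 2 = 4 * (γ₁ * γ₁ ^ q) * r →
      (c * γ₂ ^ q + c ^ q * γ₂) ^ 2 = 4 * (γ₂ * γ₂ ^ q) * r →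
      ((c ^ 2 * (γ₁ ^ q * γ₂ ^ q)) ^ q = c ^ 2 * (γ₁ ^ q * γ₂ ^ q) ∧
        c ^ 2 * (γ₁ ^ q * γ₂ ^ q) ≠ 0 ∧
        r = (c * γ₁ ^ q + c ^ q * γ₁) ^ 2 / (4 * (γ₁ * γ₁ ^ q))) := by
    intro c r hr0 e1 e2
    have hc : c ≠ 0 := by
      rintro rfl
      apply hr0
      have h0 : (0 : K) * γ₁ ^ q + (0 : K) ^ q * γ₁ = 0 := by
        rw [zero_pow hq0]; ring
      rw [h0] at e1
      have hz : 4 * (γ₁ * γ₁ ^ q) * r = 0 := by rw [← e1]; ring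
      exact (mul_eq_zero.mp hz).resolve_left h4g
    have hdiff : (γ₁ ^ q * γ₂ - γ₁ * γ₂ ^ q) *
        (c ^ 2 * (γ₁ ^ q * γ₂ ^ q) - (c ^ q) ^ 2 * (γ₁ * γ₂)) = 0 := by
      linear_combination (γ₂ * γ₂ ^ q) * e1 - (γ₁ * γ₁ ^ q) * e2
    have key : c ^ 2 * (γ₁ ^ q * γ₂ ^ q) = (c ^ q) ^ 2 * (γ₁ * γ₂) := by
      have hgne : γ₁ ^ q * γ₂ - γ₁ * γ₂ ^ q ≠ 0 := fun h => hd (by linear_combination -h)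
      have h5 := (mul_eq_zero.mp hdiff).resolve_left hgne
      linear_combination h5
    refine ⟨by rw [ht c]; exact key.symm,
      mul_ne_zero (pow_ne_zero _ hc) (mul_ne_zero hb1 hb2), ?_⟩
    rw [e1, mul_div_cancel_left₀ _ h4g]
  -- the main equivalence for a fixed c
  have hmain : ∀ c : K,
      (∃ r : K, r ^ q = r ∧ r ≠ 0 ∧
        (c * γ₁ ^ q + c ^ q * γ₁) ^ 2 = 4 * (γ₁ * γ₁ ^ q) * r ∧
        (c * γ₂ ^ q + c ^ q * γ₂) ^ 2 = 4 * (γ₂ * γ₂ ^ q) * r)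
      ↔ ((c ^ 2 * (γ₁ ^ q * γ₂ ^ q)) ^ q = c ^ 2 * (γ₁ ^ q * γ₂ ^ q) ∧
          c ^ 2 * (γ₁ ^ q * γ₂ ^ q) ≠ 0) := by
    intro c
    constructor
    · rintro ⟨r, _, hr0, e1, e2⟩
      obtain ⟨ha, hb, _⟩ := hfor c r hr0 e1 e2
      exact ⟨ha, hb⟩
    · rintro ⟨hfix, hne⟩
      obtain ⟨ha, hb, hc', hd'⟩ := hback c hfix hne
      exact ⟨_, ha, hb, hc', hd'⟩
  constructor
  · -- existence iff square
    constructor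
    · rintro ⟨c, r, hc, _, hr0, e1, e2⟩
      obtain ⟨hfix, hne, _⟩ := hfor c r hr0 e1 e2
      obtain ⟨s, hs⟩ := hsqfix _ hne hfix
      have hbb : γ₁ ^ q * γ₂ ^ q = (s / c) ^ 2 := by
        rw [div_pow, eq_div_iff (pow_ne_zero _ hc)]
        linear_combination hs
      refine ⟨(s / c) ^ q, ?_⟩
      calc γ₁ * γ₂ = (γ₁ ^ q) ^ q * (γ₂ ^ q) ^ q := by rw [hQ, hQ]
        _ = (γ₁ ^ q * γ₂ ^ q) ^ q := by rw [mul_pow]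
        _ = ((s / c) ^ 2) ^ q := by rw [hbb]
        _ = (s / c) ^ q * (s / c) ^ q := by
            rw [← pow_mul, mul_comm 2 q, pow_mul, sq]
    · rintro ⟨d, hdd⟩
      have hdne : d ≠ 0 := by
        intro h; rw [h, mul_zero] at hdd
        exact mul_ne_zero h1 h2 hdd
      have hdqne : d ^ q ≠ 0 := pow_ne_zero _ hdne
      have hbd : γ₁ ^ q * γ₂ ^ q = d ^ q * d ^ q := by
        rw [← mul_pow, hdd, mul_pow]
      have hone : ((d ^ q)⁻¹) ^ 2 * (γ₁ ^ q * γ₂ ^ q) = 1 := by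
        rw [hbd, ← pow_two, inv_pow]
        exact inv_mul_cancel₀ (pow_ne_zero 2 hdqne)
      obtain ⟨ha, hb, hc', hd'⟩ := hback (d ^ q)⁻¹
        (by rw [hone, one_pow]) (by rw [hone]; exact one_ne_zero)
      exact ⟨(d ^ q)⁻¹, _, inv_ne_zero hdqne, ha, hb, hc', hd'⟩
  · -- square case: characterization and count
    rintro ⟨d, hdd⟩
    have hdne : d ≠ 0 := by
      intro h; rw [h, mul_zero] at hdd
      exact mul_ne_zero h1 h2 hdd
    have hdqne : d ^ q ≠ 0 := pow_ne_zero _ hdne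
    have hbd : γ₁ ^ q * γ₂ ^ q = d ^ q * d ^ q := by
      rw [← mul_pow, hdd, mul_pow]
    have hc₀ : (d ^ q)⁻¹ ≠ 0 := inv_ne_zero hdqne
    refine ⟨hmain, ?_⟩
    -- counting
    have hn0 : 0 < 2 * (q - 1) := by omega
    have hQ1 : q ^ 2 - 1 ≠ 0 := by
      have h9 : 9 ≤ q ^ 2 := by
        calc 9 = 3 ^ 2 := by norm_num
          _ ≤ q ^ 2 := Nat.pow_le_pow_left hq3 2
      omega
    have hdvd : 2 * (q - 1) ∣ q ^ 2 - 1 := by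
      obtain ⟨k, hk⟩ := hqodd
      refine ⟨(q + 1) / 2, ?_⟩
      have e1 : q ^ 2 = (2 * k + 1) ^ 2 := by rw [hk]
      have e2 : (2 * k + 1) ^ 2 = 4 * (k * k) + 4 * k + 1 := by ring
      have e4 : 2 * (q - 1) * ((q + 1) / 2) = 4 * (k * k) + 4 * k := by
        rw [show q - 1 = 2 * k by omega, show (q + 1) / 2 = k + 1 by omega]
        ring
      omega
    -- a primitive 2(q-1)-th root of unity
    have hcardu : Nat.card Kˣ = q ^ 2 - 1 := by
      rw [Nat.card_units, Nat.card_eq_fintype_card, hK]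
    obtain ⟨gu, hgu⟩ := IsCyclic.exists_ofOrder_eq_natCard (α := Kˣ)
    have hordζ : orderOf (gu ^ ((q ^ 2 - 1) / (2 * (q - 1)))) = 2 * (q - 1) := by
      rw [orderOf_pow, hgu, hcardu,
        Nat.gcd_eq_right (Nat.div_dvd_of_dvd hdvd), Nat.div_div_self hdvd hQ1]
    have hprim : IsPrimitiveRoot ((gu ^ ((q ^ 2 - 1) / (2 * (q - 1))) : Kˣ) : K)
        (2 * (q - 1)) := by
      have := IsPrimitiveRoot.orderOf ((gu ^ ((q ^ 2 - 1) / (2 * (q - 1))) : Kˣ) : K)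
      rwa [orderOf_units, hordζ] at this
    -- the bijection
    set g : K → K × K := fun s => ((d ^ q)⁻¹ * s,
      (((d ^ q)⁻¹ * s) * γ₁ ^ q + ((d ^ q)⁻¹ * s) ^ q * γ₁) ^ 2 / (4 * (γ₁ * γ₁ ^ q)))
      with hg
    have hbij : Set.BijOn g {s : K | s ^ (2 * (q - 1)) = 1}
        {x : K × K | x.1 ≠ 0 ∧ x.2 ^ q = x.2 ∧ x.2 ≠ 0 ∧
          (x.1 * γ₁ ^ q + x.1 ^ q * γ₁) ^ 2 = 4 * (γ₁ * γ₁ ^ q) * x.2 ∧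
          (x.1 * γ₂ ^ q + x.1 ^ q * γ₂) ^ 2 = 4 * (γ₂ * γ₂ ^ q) * x.2} := by
      constructor
      · intro s hs
        simp only [Set.mem_setOf_eq] at hs ⊢
        have hs0 : s ≠ 0 := by
          rintro rfl
          rw [zero_pow hn0.ne'] at hs
          exact one_ne_zero hs.symm
        have hcne : (d ^ q)⁻¹ * s ≠ 0 := mul_ne_zero hc₀ hs0
        have htc : ((d ^ q)⁻¹ * s) ^ 2 * (γ₁ ^ q * γ₂ ^ q) = s ^ 2 := by
          rw [hbd]; field_simp
        have h2q : s ^ (2 * q) = s ^ 2 := by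
          calc s ^ (2 * q) = s ^ (2 * (q - 1)) * s ^ 2 := by
                rw [← pow_add]; congr 1; omega
            _ = s ^ 2 := by rw [hs, one_mul]
        have hfix : (((d ^ q)⁻¹ * s) ^ 2 * (γ₁ ^ q * γ₂ ^ q)) ^ q
            = ((d ^ q)⁻¹ * s) ^ 2 * (γ₁ ^ q * γ₂ ^ q) := by
          rw [htc, ← pow_mul]; exact h2q
        have hne : ((d ^ q)⁻¹ * s) ^ 2 * (γ₁ ^ q * γ₂ ^ q) ≠ 0 := by
          rw [htc]; exact pow_ne_zero _ hs0
        obtain ⟨ha, hb, hc', hd'⟩ := hback _ hfix hne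
        exact ⟨hcne, ha, hb, hc', hd'⟩
      constructor
      · intro s hs s' hs' hgs
        have := congrArg Prod.fst hgs
        simp only [hg] at this
        exact mul_left_cancel₀ hc₀ this
      · rintro ⟨c, r⟩ hx
        simp only [Set.mem_setOf_eq] at hx
        obtain ⟨hc, hr, hr0, e1, e2⟩ := hx
        obtain ⟨hfix, hne, hreq⟩ := hfor c r hr0 e1 e2
        refine ⟨d ^ q * c, ?_, ?_⟩
        · simp only [Set.mem_setOf_eq]
          have hs0 : d ^ q * c ≠ 0 := mul_ne_zero hdqne hc
          have htc' : (d ^ q * c) ^ 2 = c ^ 2 * (γ₁ ^ q * γ₂ ^ q) := by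
            rw [hbd]; ring
          have h2q : (d ^ q * c) ^ (2 * q) = (d ^ q * c) ^ 2 := by
            rw [pow_mul, htc']
            exact hfix
          have h' : (d ^ q * c) ^ (2 * (q - 1)) * (d ^ q * c) ^ 2
              = 1 * (d ^ q * c) ^ 2 := by
            rw [one_mul, ← pow_add, show 2 * (q - 1) + 2 = 2 * q by omega]
            exact h2q
          exact mul_right_cancel₀ (pow_ne_zero 2 hs0) h'
        · have hfst : (d ^ q)⁻¹ * (d ^ q * c) = c := inv_mul_cancel_left₀ hdqne c
          simp only [hg, hfst]
          exact Prod.ext rfl hreq.symm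
    rw [Nat.card_coe_set_eq, ← hbij.image_eq,
      Set.ncard_image_of_injOn hbij.injOn]
    have hReq : {s : K | s ^ (2 * (q - 1)) = 1}
        = ↑(Polynomial.nthRootsFinset (2 * (q - 1)) (1 : K)) := by
      ext x
      simp [Polynomial.mem_nthRootsFinset hn0 (1 : K)]
    rw [hReq, Set.ncard_coe_finset, hprim.card_nthRootsFinset]
end

section
/- Let q be an odd prime power, γ ∈ GF(q²) with γ² ≠ γ̄² (where γ̄ = γ^q), and c ∈ GF(q²), r ∈ GF(q). The pair (c,r) satisfies both tangency conditions (cγ̄ + c̄γ)² = 4γγ̄r and (cγ + c̄γ̄)² = 4γγ̄r with c ≠ 0 if and only if either c̄ = c and r = c²(γ+γ̄)²/(4γγ̄), or c̄ = −c and r = c²(γ−γ̄)²/(4γγ̄). -/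
/-- Tangency of B¹(c,r) with the two symmetric lines γ̄z + γz̄ = 0 and
γz + γ̄z̄ = 0 (for γ² ≠ γ̄²) holds with c ≠ 0 iff either c̄ = c and
r = c²(γ+γ̄)²/(4γγ̄), or c̄ = −c and r = c²(γ−γ̄)²/(4γγ̄). -/
theorem stmt_9 (p m q : ℕ) (hp : p.Prime) (hp2 : p ≠ 2) (hm : m ≠ 0)
    (hq : q = p ^ m)
    (K : Type) [Field K] [Fintype K] (hK : Fintype.card K = q ^ 2)
    (γ : K) (hγ2 : γ ^ 2 ≠ (γ ^ q) ^ 2)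
    (c r : K) (hr : r ^ q = r) :
    ((c * γ ^ q + c ^ q * γ) ^ 2 = 4 * (γ * γ ^ q) * r ∧
     (c * γ + c ^ q * γ ^ q) ^ 2 = 4 * (γ * γ ^ q) * r ∧ c ≠ 0) ↔
    ((c ^ q = c ∧ r = c ^ 2 * (γ + γ ^ q) ^ 2 / (4 * (γ * γ ^ q)) ∧ c ≠ 0) ∨
     (c ^ q = -c ∧ r = c ^ 2 * (γ - γ ^ q) ^ 2 / (4 * (γ * γ ^ q)) ∧ c ≠ 0)) := by
  -- characteristic is p, so 2 ≠ 0 in K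
  have hp' : Nat.Prime (ringChar K) := by
    have : Fintype.card K ≠ 1 := by
      rw [hK, hq]
      have : 2 ≤ p := hp.two_le
      have hpm : 1 < p ^ m := Nat.one_lt_pow hm (by omega)
      have : 1 < (p ^ m) ^ 2 := Nat.one_lt_pow (by norm_num) hpm
      omega
    exact CharP.char_is_prime K (ringChar K)
  obtain ⟨n, hpn, hcard⟩ := FiniteField.card K (ringChar K)
  have hpp : ringChar K = p := by
    have hdvd : ringChar K ∣ p ^ (m * 2) := by
      rw [pow_mul, ← hq, ← hK, hcard]
      exact dvd_pow_self _ (by positivity)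
    exact (Nat.prime_dvd_prime_iff_eq hp' hp).mp (hp'.dvd_of_dvd_pow hdvd)
  have h2 : (2 : K) ≠ 0 := by
    intro h
    have hd : ringChar K ∣ 2 :=
      (CharP.cast_eq_zero_iff K (ringChar K) 2).mp (by exact_mod_cast h)
    rw [hpp] at hd
    exact hp2 ((Nat.prime_dvd_prime_iff_eq hp Nat.prime_two).mp hd)
  have h4 : (4 : K) ≠ 0 := by
    have : (4 : K) = 2 * 2 := by norm_num
    rw [this]; exact mul_ne_zero h2 h2
  have hq0 : q ≠ 0 := by rw [hq]; exact pow_ne_zero _ hp.pos.ne'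
  have hγ : γ ≠ 0 := by rintro rfl; simp [zero_pow hq0] at hγ2
  have hΓ : γ ^ q ≠ 0 := pow_ne_zero _ hγ
  have hD : 4 * (γ * γ ^ q) ≠ 0 := mul_ne_zero h4 (mul_ne_zero hγ hΓ)
  have hdiff : (γ - γ ^ q) * (γ + γ ^ q) ≠ 0 := by
    intro h
    apply hγ2
    linear_combination h
  constructor
  · rintro ⟨h1, h2', hc⟩
    have key : (c ^ q - c) * (c ^ q + c) * ((γ - γ ^ q) * (γ + γ ^ q)) = 0 := by
      linear_combination h1 - h2'
    rcases mul_eq_zero.mp key with key | key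
    · rcases mul_eq_zero.mp key with key | key
      · left
        have hcc : c ^ q = c := sub_eq_zero.mp key
        refine ⟨hcc, ?_, hc⟩
        rw [eq_div_iff hD]
        rw [hcc] at h2'
        linear_combination -h2'
      · right
        have hcc : c ^ q = -c := by linear_combination key
        refine ⟨hcc, ?_, hc⟩
        rw [eq_div_iff hD]
        rw [hcc] at h2'
        linear_combination -h2'
    · exact absurd key hdiff
  · rintro (⟨hcc, hrr, hc⟩ | ⟨hcc, hrr, hc⟩) <;>
      refine ⟨?_, ?_, hc⟩ <;> rw [hcc, hrr] <;> field_simp <;> ring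
end

section
/- Let q be an odd prime power and γ ∈ GF(q²)\{0} with γ² ≠ γ̄², γγ̄ a square in GF(q) with square root s, and u = (2s + (γ+γ̄))/(2s − (γ+γ̄)). If −1 is a square in GF(q), then u is a nonsquare in GF(q), and hence the multiplicative order of u divides q−1 but does not divide (q−1)/2. If −1 is a nonsquare in GF(q), then u is a square in GF(q), its multiplicative order divides (q−1)/2, and this order is odd. -/
lemma gf_sq_iff (q : ℕ) (hq3 : 3 ≤ q) (hodd : Odd q)
    (K : Type) [Field K] [Fintype K] (hK : Fintype.card K = q ^ 2)
    (x : K) (hx : x ≠ 0) (hx1 : x ^ (q - 1) = 1) :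
    (∃ y : K, y ^ q = y ∧ y ^ 2 = x) ↔ x ^ ((q - 1) / 2) = 1 := by
  obtain ⟨a, ha⟩ : ∃ a, q = 2 * a + 1 := by obtain ⟨j, hj⟩ := hodd; exact ⟨j, by omega⟩
  have ha1 : 1 ≤ a := by omega
  have hdiv : (q - 1) / 2 = a := by omega
  have hsub : q - 1 = 2 * a := by omega
  have hsq : (q + 1) * (q - 1) = q ^ 2 - 1 := by
    have h1 : q ^ 2 = q * q := sq q
    have h2 : (q + 1) * (q - 1) = q * q - 1 := by
      obtain ⟨r, hr⟩ : ∃ r, q = r + 1 := ⟨q - 1, by omega⟩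
      subst hr
      have e1 : (r + 1 + 1) * (r + 1 - 1) = r * r + 2 * r := by
        simp only [Nat.add_sub_cancel]; ring
      have e2 : (r + 1) * (r + 1) = r * r + 2 * r + 1 := by ring
      omega
    omega
  have hcard2 : q ^ 2 - 1 = 2 * a * (q + 1) := by
    have h1 : (q + 1) * (q - 1) = (2 * a) * (q + 1) := by rw [hsub]; ring
    omega
  classical
  constructor
  · rintro ⟨y, hyq, hy2⟩
    have hy0 : y ≠ 0 := by rintro rfl; simp at hy2; exact hx hy2.symm
    have hy1 : y ^ (q - 1) = 1 := by
      have h1 : y ^ (q - 1) * y = y := by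
        rw [← pow_succ, show q - 1 + 1 = q by omega, hyq]
      field_simp at h1
      exact h1
    rw [hdiv, ← hy2, ← pow_mul, ← hsub, hy1]
  · intro h
    obtain ⟨g, hg⟩ := IsCyclic.exists_generator (α := Kˣ)
    have hog : orderOf g = q ^ 2 - 1 := by
      rw [orderOf_eq_card_of_forall_mem_zpowers hg, Nat.card_eq_fintype_card,
        Fintype.card_units, hK]
    set xu : Kˣ := Units.mk0 x hx with hxu
    obtain ⟨k, hk⟩ : ∃ k : ℕ, g ^ k = xu :=
      mem_powers_iff_mem_zpowers.mpr (hg xu)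
    have hd1 : q ^ 2 - 1 ∣ k * (q - 1) := by
      rw [← hog]
      apply orderOf_dvd_of_pow_eq_one
      rw [pow_mul, hk]
      ext
      push_cast [hxu]
      exact hx1
    obtain ⟨k', hk'⟩ : (q + 1) ∣ k := by
      rw [hcard2, hsub] at hd1
      have h2 : (q + 1) * (2 * a) ∣ k * (2 * a) := by
        convert hd1 using 1; ring
      exact (Nat.mul_dvd_mul_iff_right (show 0 < 2 * a by omega)).mp h2
    obtain ⟨k'', hk''⟩ : (2 : ℕ) ∣ k' := by
      have hxa : xu ^ a = 1 := by
        ext; push_cast [hxu]; rw [← hdiv]; exact h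
      have hd2 : q ^ 2 - 1 ∣ k * a := by
        rw [← hog]
        apply orderOf_dvd_of_pow_eq_one
        rw [pow_mul, hk, hxa]
      rw [hcard2, hk'] at hd2
      have hpos : 0 < a * (q + 1) := by positivity
      have h3 : 2 * (a * (q + 1)) ∣ k' * (a * (q + 1)) := by
        convert hd2 using 1 <;> ring
      exact (Nat.mul_dvd_mul_iff_right hpos).mp h3
    have hexp : (q + 1) * k'' * (q - 1) = (q ^ 2 - 1) * k'' := by
      rw [mul_right_comm, hsq]
    have hg1 : (g ^ ((q + 1) * k'')) ^ (q - 1) = (1 : Kˣ) := by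
      rw [← pow_mul, hexp, pow_mul, ← hog, pow_orderOf_eq_one, one_pow]
    have hg2 : (g ^ ((q + 1) * k'')) ^ 2 = xu := by
      rw [← pow_mul, show (q + 1) * k'' * 2 = k by rw [hk', hk'']; ring, hk]
    refine ⟨((g ^ ((q + 1) * k'') : Kˣ) : K), ?_, ?_⟩
    · have h1 : ((g ^ ((q + 1) * k'') : Kˣ) : K) ^ (q - 1) = 1 := by
        rw [← Units.val_pow_eq_pow_val, hg1, Units.val_one]
      calc ((g ^ ((q + 1) * k'') : Kˣ) : K) ^ q
          = ((g ^ ((q + 1) * k'') : Kˣ) : K) ^ (q - 1) *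
              ((g ^ ((q + 1) * k'') : Kˣ) : K) := by
            rw [← pow_succ, show q - 1 + 1 = q by omega]
        _ = _ := by rw [h1, one_mul]
    · rw [← Units.val_pow_eq_pow_val, hg2]
      rfl

/-- For u = (2s + (γ+γ̄))/(2s − (γ+γ̄)) with s² = γγ̄, s ∈ GF(q):
if −1 is a square in GF(q) then u is a nonsquare in GF(q) and ord(u) ∣ q−1
but ord(u) ∤ (q−1)/2; if −1 is a nonsquare in GF(q) then u is a square in
GF(q), ord(u) ∣ (q−1)/2 and ord(u) is odd. -/
theorem stmt_13 (p m q : ℕ) (hp : p.Prime) (hp2 : p ≠ 2) (hm : m ≠ 0)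
    (hq : q = p ^ m)
    (K : Type) [Field K] [Fintype K] (hK : Fintype.card K = q ^ 2)
    (γ : K) (hγ : γ ≠ 0) (hγ2 : γ ^ 2 ≠ (γ ^ q) ^ 2)
    (s : K) (hs : s ^ q = s) (hs2 : s ^ 2 = γ * γ ^ q)
    (u : K) (hu : u = (2 * s + (γ + γ ^ q)) / (2 * s - (γ + γ ^ q))) :
    ((∃ y : K, y ^ q = y ∧ y ^ 2 = (-1 : K)) →
      (¬ ∃ y : K, y ^ q = y ∧ y ^ 2 = u) ∧
      orderOf u ∣ q - 1 ∧ ¬ orderOf u ∣ (q - 1) / 2) ∧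
    ((¬ ∃ y : K, y ^ q = y ∧ y ^ 2 = (-1 : K)) →
      (∃ y : K, y ^ q = y ∧ y ^ 2 = u) ∧
      orderOf u ∣ (q - 1) / 2 ∧ Odd (orderOf u)) := by
  haveI := Fact.mk hp
  have hp3 : 3 ≤ p := by have := hp.two_le; omega
  have hq3 : 3 ≤ q := by
    rw [hq]
    calc 3 = 3 ^ 1 := (pow_one 3).symm
    _ ≤ p ^ m := Nat.pow_le_pow_left hp3 1 |>.trans (Nat.pow_le_pow_right (by omega) (by omega))
  have hqodd : Odd q := by rw [hq]; exact (hp.odd_of_ne_two hp2).pow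
  -- characteristic
  have hcharp : CharP K p := by
    have h0 : ((Fintype.card K : ℕ) : K) = 0 := Nat.cast_card_eq_zero K
    rw [hK, hq] at h0
    push_cast at h0
    have hpz : (p : K) = 0 := by
      have h0' : (p : K) ^ (m * 2) = 0 := by rw [pow_mul]; exact_mod_cast h0
      exact pow_eq_zero_iff (Nat.mul_ne_zero hm two_ne_zero) |>.mp h0'
    exact (CharP.charP_iff_prime_eq_zero hp).2 hpz
  have h2 : (2 : K) ≠ 0 := by
    intro h
    have h2' : ((2 : ℕ) : K) = 0 := by exact_mod_cast h
    have := (CharP.cast_eq_zero_iff K p 2).mp h2'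
    have := Nat.le_of_dvd (by norm_num) this
    omega
  have hneg1 : (-1 : K) ≠ 1 := by
    intro h
    apply h2
    linear_combination -h
  -- Frobenius is additive
  have hfadd : ∀ x y : K, (x + y) ^ q = x ^ q + y ^ q := by
    intro x y; rw [hq]; exact add_pow_char_pow x y p m
  have hfsub : ∀ x y : K, (x - y) ^ q = x ^ q - y ^ q := by
    intro x y; rw [hq]; exact sub_pow_char_pow x y m
  have h2q : (2 : K) ^ q = 2 := by
    have := hfadd 1 1
    norm_num at this
    convert this using 2 <;> norm_num
  have hγqq : (γ ^ q) ^ q = γ := by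
    have hc := FiniteField.pow_card γ
    rw [hK] at hc
    rw [← pow_mul, ← sq, hc]
  have hsumq : (γ + γ ^ q) ^ q = γ + γ ^ q := by
    rw [hfadd, hγqq]; ring
  -- nonvanishing
  have htne : γ - γ ^ q ≠ 0 := by
    intro h
    have h' : γ = γ ^ q := sub_eq_zero.mp h
    exact hγ2 (by rw [← h'])
  have hND : (2 * s + (γ + γ ^ q)) * (2 * s - (γ + γ ^ q)) = -((γ - γ ^ q) ^ 2) := by
    linear_combination 4 * hs2
  have hNDne : (2 * s + (γ + γ ^ q)) * (2 * s - (γ + γ ^ q)) ≠ 0 := by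
    rw [hND]
    simpa using pow_ne_zero 2 htne
  have hN0 : 2 * s + (γ + γ ^ q) ≠ 0 := fun h => hNDne (by rw [h, zero_mul])
  have hD0 : 2 * s - (γ + γ ^ q) ≠ 0 := fun h => hNDne (by rw [h, mul_zero])
  have hu0 : u ≠ 0 := by rw [hu]; exact div_ne_zero hN0 hD0
  have huq : u ^ q = u := by
    rw [hu, div_pow, hfadd, hfsub, mul_pow, h2q, hs, hsumq]
  have hu1 : u ^ (q - 1) = 1 := by
    have h1 : u ^ (q - 1) * u = u := by
      rw [← pow_succ, show q - 1 + 1 = q by omega, huq]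
    field_simp at h1
    exact h1
  -- u = -(w^2) where w = t/D has w^(q-1) = -1
  set w : K := (γ - γ ^ q) / (2 * s - (γ + γ ^ q)) with hw
  have hw0 : w ≠ 0 := div_ne_zero htne hD0
  have huw : u = -(w ^ 2) := by
    rw [hu, hw, div_pow]
    rw [div_eq_iff hD0]
    field_simp
    linear_combination hND
  have hwq : w ^ q = -w := by
    rw [hw, div_pow, hfsub, hγqq, hfsub, mul_pow, h2q, hs, hsumq]
    rw [show γ ^ q - γ = -(γ - γ ^ q) by ring, neg_div]
  have hwpow : w ^ (q - 1) = -1 := by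
    have h1 : w ^ (q - 1) * w = -w := by
      rw [← pow_succ, show q - 1 + 1 = q by omega, hwq]
    have := mul_right_cancel₀ hw0 (by rw [h1]; ring : w ^ (q - 1) * w = -1 * w)
    exact this
  have hsub2 : 2 * ((q - 1) / 2) = q - 1 := by
    obtain ⟨j, hj⟩ := hqodd; omega
  have hukey : u ^ ((q - 1) / 2) = -(-1 : K) ^ ((q - 1) / 2) := by
    rw [huw, neg_pow, ← pow_mul, mul_comm 2 ((q - 1) / 2), mul_comm ((q-1)/2) 2, hsub2,
      hwpow]
    ring
  -- gf_sq_iff instances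
  have hm1pow : (-1 : K) ^ (q - 1) = 1 := by
    apply Even.neg_one_pow
    obtain ⟨j, hj⟩ := hqodd
    exact ⟨(q - 1) / 2, by omega⟩
  have hiff1 : (∃ y : K, y ^ q = y ∧ y ^ 2 = (-1 : K)) ↔ (-1 : K) ^ ((q - 1) / 2) = 1 :=
    gf_sq_iff q hq3 hqodd K hK (-1) (neg_ne_zero.mpr one_ne_zero) hm1pow
  have hiffu : (∃ y : K, y ^ q = y ∧ y ^ 2 = u) ↔ u ^ ((q - 1) / 2) = 1 :=
    gf_sq_iff q hq3 hqodd K hK u hu0 hu1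
  constructor
  · intro hex
    have h1 : (-1 : K) ^ ((q - 1) / 2) = 1 := hiff1.mp hex
    have hu2 : u ^ ((q - 1) / 2) = -1 := by rw [hukey, h1]
    refine ⟨?_, orderOf_dvd_of_pow_eq_one hu1, ?_⟩
    · intro hexu
      have := hiffu.mp hexu
      rw [hu2] at this
      exact hneg1 this
    · intro hdvd
      have := orderOf_dvd_iff_pow_eq_one.mp hdvd
      rw [hu2] at this
      exact hneg1 this
  · intro hnex
    have h1 : (-1 : K) ^ ((q - 1) / 2) ≠ 1 := fun h => hnex (hiff1.mpr h)
    have hodd2 : Odd ((q - 1) / 2) := by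
      rcases Nat.even_or_odd ((q - 1) / 2) with he | ho
      · exact absurd (Even.neg_one_pow he) h1
      · exact ho
    have hu2 : u ^ ((q - 1) / 2) = 1 := by rw [hukey, Odd.neg_one_pow hodd2]; ring
    refine ⟨hiffu.mpr hu2, orderOf_dvd_of_pow_eq_one hu2, ?_⟩
    rcases Nat.even_or_odd (orderOf u) with he | ho
    · exfalso
      have hd : 2 ∣ (q - 1) / 2 := dvd_trans he.two_dvd (orderOf_dvd_of_pow_eq_one hu2)
      exact (Nat.not_even_iff_odd.mpr hodd2) (even_iff_two_dvd.mpr hd)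
    · exact ho
end

section
/- Let q be an odd prime power and g ∈ GF(q²)\{0} with g ≠ ±ḡ (where ḡ = g^q). Define κ = (g+ḡ)²/(g·ḡ) ∈ GF(q). Then g is a square in GF(q²) if and only if either (κ = 0 and −1 is a nonsquare in GF(q)) or (κ ≠ 0 and κ is a square in GF(q)). -/
/-- For g ∈ GF(q²)\{0} with g ≠ ±ḡ and κ = (g+ḡ)²/(gḡ): g is a square in
GF(q²) iff (κ = 0 and −1 is a nonsquare in GF(q)) or (κ ≠ 0 and κ is a
square in GF(q)). -/
theorem stmt_15 (p m q : ℕ) (hp : p.Prime) (hp2 : p ≠ 2) (hm : m ≠ 0)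
    (hq : q = p ^ m)
    (K : Type) [Field K] [Fintype K] (hK : Fintype.card K = q ^ 2)
    (g : K) (hg : g ≠ 0) (hg1 : g ≠ g ^ q) (hg2 : g ≠ -(g ^ q))
    (κ : K) (hκ : κ = (g + g ^ q) ^ 2 / (g * g ^ q)) :
    IsSquare g ↔
      (κ = 0 ∧ ¬ ∃ y : K, y ^ q = y ∧ y ^ 2 = (-1 : K)) ∨
      (κ ≠ 0 ∧ ∃ y : K, y ^ q = y ∧ y ^ 2 = κ) := by
  haveI hfact : Fact p.Prime := ⟨hp⟩
  -- characteristic of K is p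
  have hchar : CharP K (ringChar K) := ringChar.charP K
  obtain ⟨n, hpn, hcard⟩ := FiniteField.card K (ringChar K)
  have hring : ringChar K = p := by
    have he : ringChar K ^ (n : ℕ) = p ^ (m * 2) := by
      rw [← hcard, hK, hq, ← pow_mul]
    have hdvd : ringChar K ∣ p ^ (m * 2) :=
      he ▸ dvd_pow_self _ (by exact_mod_cast n.ne_zero)
    exact (Nat.prime_dvd_prime_iff_eq hpn hp).mp (hpn.dvd_of_dvd_pow hdvd)
  haveI hcharp : CharP K p := hring ▸ hchar
  have hchar2 : ringChar K ≠ 2 := by rw [hring]; exact hp2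
  -- basic numerics
  have hq1 : 1 ≤ q := hq ▸ Nat.one_le_pow _ _ hp.pos
  have hqodd : Odd q := hq ▸ (hp.odd_of_ne_two hp2).pow
  obtain ⟨k, hk⟩ := hqodd
  have hk' : q = 2 * k + 1 := by omega
  have hcard2 : Fintype.card K / 2 = (q + 1) * k := by
    have e1 : q ^ 2 = 2 * ((q + 1) * k) + 1 := by subst hk'; ring
    omega
  set N := g * g ^ q with hN
  set T := g + g ^ q with hT
  have hgq2 : (g ^ q) ^ q = g := by
    rw [← pow_mul, ← pow_two, ← hK, FiniteField.pow_card]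
  have hTq : T ^ q = T := by
    rw [hT, hq, add_pow_char_pow, ← hq, hgq2, add_comm]
  have hT0 : T ≠ 0 := by
    intro h
    exact hg2 (eq_neg_of_add_eq_zero_left h)
  have hgq0 : g ^ q ≠ 0 := pow_ne_zero _ hg
  have hN0 : N ≠ 0 := mul_ne_zero hg hgq0
  have hκ0 : κ ≠ 0 := by
    rw [hκ]
    exact div_ne_zero (pow_ne_zero 2 hT0) hN0
  have hgN : g ^ ((q + 1) * k) = N ^ k := by
    rw [pow_mul, pow_succ, hN, mul_comm]
  have hgiff : IsSquare g ↔ N ^ k = 1 := by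
    rw [FiniteField.isSquare_iff hchar2 hg, hcard2, hgN]
  rw [hgiff]
  constructor
  · intro hNk
    refine Or.inr ⟨hκ0, ?_⟩
    have hNsq : IsSquare N := by
      rw [FiniteField.isSquare_iff hchar2 hN0, hcard2, mul_comm, pow_mul, hNk, one_pow]
    obtain ⟨w, hw⟩ := hNsq
    have hw2 : w ^ 2 = N := by rw [pow_two, ← hw]
    have hw0 : w ≠ 0 := by
      intro h; apply hN0; rw [← hw2, h]; ring
    have hw2k : w ^ (2 * k) = 1 := by rw [pow_mul, hw2, hNk]
    have hwq : w ^ q = w := by rw [hk', pow_succ, hw2k, one_mul]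
    refine ⟨T / w, ?_, ?_⟩
    · rw [div_pow, hTq, hwq]
    · rw [div_pow, hw2, hκ]
  · rintro (⟨h0, -⟩ | ⟨-, y, hyq, hy2⟩)
    · exact absurd h0 hκ0
    · have hy0 : y ≠ 0 := by
        intro h; apply hκ0; rw [← hy2, h]; ring
      have hz0 : T / y ≠ 0 := div_ne_zero hT0 hy0
      have hzq : (T / y) ^ q = T / y := by rw [div_pow, hTq, hyq]
      have hz2 : (T / y) ^ 2 = N := by
        rw [div_pow, hy2, hκ]
        field_simp
      have h2k : (T / y) ^ (2 * k) = 1 := by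
        have : (T / y) ^ (2 * k) * (T / y) = 1 * (T / y) := by
          rw [← pow_succ, ← hk', hzq, one_mul]
        exact mul_right_cancel₀ hz0 this
      rw [← hz2, ← pow_mul, h2k]
end

section
/- Let q be an odd prime power and γ ∈ GF(q²)\{0} with γ² ≠ γ̄². Set κ = (γ/γ̄ + γ̄/γ)² and s = γ/γ̄ + γ̄/γ (a square root of κ in GF(q)). Then: s + 2 = (γ+γ̄)²/(γγ̄) is a square in GF(q) if and only if γγ̄ is a square in GF(q) (equivalently, γ is a square in GF(q²)); and −s + 2 = (γ−γ̄)²/(−γγ̄) is a square in GF(q) if and only if −γγ̄ is a nonsquare in GF(q). -/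
/-- With s = γ/γ̄ + γ̄/γ: s + 2 = (γ+γ̄)²/(γγ̄) and it is a square in GF(q)
iff γγ̄ is a square in GF(q), iff γ is a square in GF(q²); and
−s + 2 = (γ−γ̄)²/(−γγ̄) and it is a square in GF(q) iff −γγ̄ is a
nonsquare in GF(q). -/
theorem stmt_17 (p m q : ℕ) (hp : p.Prime) (hp2 : p ≠ 2) (hm : m ≠ 0)
    (hq : q = p ^ m)
    (K : Type) [Field K] [Fintype K] (hK : Fintype.card K = q ^ 2)
    (γ : K) (hγ : γ ≠ 0) (hγ2 : γ ^ 2 ≠ (γ ^ q) ^ 2)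
    (s : K) (hs : s = γ / γ ^ q + γ ^ q / γ) :
    s + 2 = (γ + γ ^ q) ^ 2 / (γ * γ ^ q) ∧
    -s + 2 = (γ - γ ^ q) ^ 2 / (-(γ * γ ^ q)) ∧
    ((∃ y : K, y ^ q = y ∧ y ^ 2 = s + 2) ↔
      (∃ y : K, y ^ q = y ∧ y ^ 2 = γ * γ ^ q)) ∧
    ((∃ y : K, y ^ q = y ∧ y ^ 2 = s + 2) ↔ IsSquare γ) ∧
    ((∃ y : K, y ^ q = y ∧ y ^ 2 = -s + 2) ↔
      ¬ ∃ y : K, y ^ q = y ∧ y ^ 2 = -(γ * γ ^ q)) := by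
  haveI : Fact (Nat.Prime p) := ⟨hp⟩
  have hqodd : Odd q := by rw [hq]; exact (hp.odd_of_ne_two hp2).pow
  obtain ⟨j, hj⟩ := hqodd
  -- characteristic
  have hcprime : (ringChar K).Prime := by
    haveI := ringChar.charP K
    exact CharP.char_is_prime K (ringChar K)
  have hcdvd : ringChar K ∣ q ^ 2 := by
    haveI := ringChar.charP K
    rw [← hK]
    exact (CharP.cast_eq_zero_iff K (ringChar K) _).mp (FiniteField.cast_card_eq_zero K)
  have hcp : ringChar K = p := by
    have h1 : ringChar K ∣ p := by
      rw [hq, ← pow_mul] at hcdvd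
      exact hcprime.dvd_of_dvd_pow hcdvd
    exact (Nat.prime_dvd_prime_iff_eq hcprime hp).mp h1
  have hchar2 : ringChar K ≠ 2 := by rw [hcp]; exact hp2
  haveI hcharK : CharP K p := hcp ▸ ringChar.charP K
  have h2 : (2 : K) ≠ 0 := Ring.two_ne_zero hchar2
  -- Frobenius: x ↦ x ^ q is additive
  have hfrob : ∀ x y : K, (x + y) ^ q = x ^ q + y ^ q := by
    intro x y; rw [hq]; exact add_pow_char_pow (x := x) (y := y) (p := p) (n := m)
  have hneg : ∀ x : K, (-x) ^ q = -x ^ q := fun x => Odd.neg_pow ⟨j, hj⟩ x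
  have hfrobsub : ∀ x y : K, (x - y) ^ q = x ^ q - y ^ q := by
    intro x y
    rw [sub_eq_add_neg, hfrob, hneg, ← sub_eq_add_neg]
  -- x ^ q ^ q = x
  have hqq : ∀ x : K, (x ^ q) ^ q = x := by
    intro x
    rw [← pow_mul, ← pow_two, ← hK]
    exact FiniteField.pow_card x
  -- basic nonvanishing
  have hg0 : γ ^ q ≠ 0 := pow_ne_zero q hγ
  have hb0 : γ * γ ^ q ≠ 0 := mul_ne_zero hγ hg0
  have hadd : γ + γ ^ q ≠ 0 := by
    intro h
    exact hγ2 (by linear_combination (γ - γ ^ q) * h)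
  have hsub : γ - γ ^ q ≠ 0 := by
    intro h
    exact hγ2 (by linear_combination (γ + γ ^ q) * h)
  -- fixedness of the relevant elements
  have hfix_b : (γ * γ ^ q) ^ q = γ * γ ^ q := by
    rw [mul_pow, hqq, mul_comm]
  have hfix_a : (γ + γ ^ q) ^ q = γ + γ ^ q := by
    rw [hfrob, hqq, add_comm]
  have hanti_d : (γ - γ ^ q) ^ q = -(γ - γ ^ q) := by
    rw [hfrobsub, hqq]; ring
  -- exponent arithmetic
  have hq2j : q ^ 2 / 2 = 2 * j * (j + 1) := by
    have : q ^ 2 = 2 * (2 * j * (j + 1)) + 1 := by subst hj; ring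
    omega
  have hq2j' : q ^ 2 / 2 = (q + 1) * j := by
    have : q ^ 2 = 2 * ((q + 1) * j) + 1 := by subst hj; ring
    omega
  -- pow of fixed elements
  have hfix_pow : ∀ c : K, c ≠ 0 → c ^ q = c → c ^ (2 * j) = 1 := by
    intro c hc hcf
    have h1 : c ^ (2 * j) * c = 1 * c := by
      rw [one_mul, ← pow_succ, ← hj, hcf]
    exact mul_right_cancel₀ hc h1
  -- every nonzero fixed element has a square root which is fixed or anti-fixed
  have hroot : ∀ c : K, c ≠ 0 → c ^ q = c → ∃ w : K, w ^ 2 = c ∧ (w ^ q = w ∨ w ^ q = -w) := by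
    intro c hc hcf
    have hsq : IsSquare c := by
      rw [FiniteField.isSquare_iff hchar2 hc, hK, hq2j, pow_mul, hfix_pow c hc hcf, one_pow]
    obtain ⟨w, hw⟩ := hsq
    refine ⟨w, by rw [pow_two, ← hw], ?_⟩
    have hw0 : w ≠ 0 := by
      intro h; apply hc; rw [hw, h, mul_zero]
    have h1 : (w ^ q - w) * (w ^ q + w) = 0 := by
      have e1 : (w ^ q) ^ 2 = (w * w) ^ q := by
        rw [← pow_mul, mul_comm q 2, pow_mul, pow_two]
      have e2 : (w ^ q) ^ 2 = w ^ 2 := by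
        rw [e1, ← hw, hcf, hw, pow_two]
      linear_combination e2
    rcases mul_eq_zero.mp h1 with h | h
    · left; linear_combination h
    · right; linear_combination h
  -- Part 1 and 2 : the algebraic identities
  have part1 : s + 2 = (γ + γ ^ q) ^ 2 / (γ * γ ^ q) := by
    rw [hs]; field_simp [hγ, hg0]; ring
  have part2 : -s + 2 = (γ - γ ^ q) ^ 2 / (-(γ * γ ^ q)) := by
    rw [hs]; field_simp [hγ, hg0]; ring
  -- Part 3
  have part3 : (∃ y : K, y ^ q = y ∧ y ^ 2 = s + 2) ↔
      (∃ y : K, y ^ q = y ∧ y ^ 2 = γ * γ ^ q) := by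
    constructor
    · rintro ⟨y, hyf, hy2⟩
      have hy0 : y ≠ 0 := by
        intro h
        rw [h] at hy2
        have h0 : (γ + γ ^ q) ^ 2 / (γ * γ ^ q) = 0 := by rw [← part1, ← hy2]; ring
        exact div_ne_zero (pow_ne_zero 2 hadd) hb0 h0
      refine ⟨(γ + γ ^ q) / y, ?_, ?_⟩
      · rw [div_pow, hfix_a, hyf]
      · rw [div_pow, hy2, part1]
        field_simp [hadd, hb0]
    · rintro ⟨y, hyf, hy2⟩
      have hy0 : y ≠ 0 := by
        intro h; rw [h] at hy2; exact hb0 (by rw [← hy2]; ring)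
      refine ⟨(γ + γ ^ q) / y, ?_, ?_⟩
      · rw [div_pow, hfix_a, hyf]
      · rw [div_pow, hy2, part1]
  -- Part 4
  have part4 : (∃ y : K, y ^ q = y ∧ y ^ 2 = γ * γ ^ q) ↔ IsSquare γ := by
    constructor
    · rintro ⟨y, hyf, hy2⟩
      have hy0 : y ≠ 0 := by
        intro h; rw [h] at hy2; exact hb0 (by rw [← hy2]; ring)
      rw [FiniteField.isSquare_iff hchar2 hγ, hK, hq2j']
      calc γ ^ ((q + 1) * j) = (γ ^ (q + 1)) ^ j := pow_mul γ (q + 1) j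
        _ = (γ * γ ^ q) ^ j := by rw [pow_succ, mul_comm (γ ^ q) γ]
        _ = (y ^ 2) ^ j := by rw [hy2]
        _ = y ^ (2 * j) := by rw [← pow_mul]
        _ = 1 := hfix_pow y hy0 hyf
    · rintro ⟨w, hw⟩
      have hw0 : w ≠ 0 := by intro h; apply hγ; rw [hw, h, mul_zero]
      refine ⟨w * w ^ q, ?_, ?_⟩
      · rw [mul_pow, hqq, mul_comm]
      · have hwq : (w ^ q) ^ 2 = (w * w) ^ q := by
          rw [← pow_mul, mul_comm q 2, pow_mul, pow_two]
        calc (w * w ^ q) ^ 2 = w * w * (w ^ q) ^ 2 := by ring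
          _ = w * w * (w * w) ^ q := by rw [hwq]
          _ = γ * γ ^ q := by rw [← hw]
  -- Part 5
  have part5 : (∃ y : K, y ^ q = y ∧ y ^ 2 = -s + 2) ↔
      ¬ ∃ y : K, y ^ q = y ∧ y ^ 2 = -(γ * γ ^ q) := by
    have hnb0 : -(γ * γ ^ q) ≠ 0 := neg_ne_zero.mpr hb0
    have hfix_nb : (-(γ * γ ^ q)) ^ q = -(γ * γ ^ q) := by rw [hneg, hfix_b]
    constructor
    · rintro ⟨y, hyf, hy2⟩ ⟨u, huf, hu2⟩
      have hy0 : y ≠ 0 := by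
        intro h
        rw [h] at hy2
        have h0 : (γ - γ ^ q) ^ 2 / (-(γ * γ ^ q)) = 0 := by rw [← part2, ← hy2]; ring
        exact div_ne_zero (pow_ne_zero 2 hsub) hnb0 h0
      have hu0 : u ≠ 0 := by
        intro h; rw [h] at hu2; exact hnb0 (by rw [← hu2]; ring)
      set z := (γ - γ ^ q) / y with hz
      have hz2 : z ^ 2 = -(γ * γ ^ q) := by
        rw [hz, div_pow, hy2, part2]
        field_simp [hsub, hnb0]
      have hzanti : z ^ q = -z := by
        rw [hz, div_pow, hanti_d, hyf, neg_div]
      have hz0 : z ≠ 0 := by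
        rw [hz]; exact div_ne_zero hsub hy0
      have h1 : (z - u) * (z + u) = 0 := by
        have h2' : z ^ 2 = u ^ 2 := by rw [hz2, hu2]
        linear_combination h2'
      have hzf : z ^ q = z := by
        rcases mul_eq_zero.mp h1 with h | h
        · have hzu : z = u := by linear_combination h
          rw [hzu, huf]
        · have hzu : z = -u := by linear_combination h
          rw [hzu, hneg, huf]
      have h2z : (2 : K) * z = 0 := by
        have hh := hzanti.symm.trans hzf
        linear_combination -hh
      rcases mul_eq_zero.mp h2z with h | h
      · exact h2 h
      · exact hz0 h
    · intro hns
      obtain ⟨w, hw2, hwor⟩ := hroot (-(γ * γ ^ q)) hnb0 hfix_nb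
      have hw0 : w ≠ 0 := by
        intro h; rw [h] at hw2; exact hnb0 (by rw [← hw2]; ring)
      rcases hwor with hwf | hwa
      · exact absurd ⟨w, hwf, hw2⟩ hns
      · refine ⟨(γ - γ ^ q) / w, ?_, ?_⟩
        · rw [div_pow, hanti_d, hwa, neg_div_neg_eq]
        · rw [div_pow, hw2, part2]
  exact ⟨part1, part2, part3, part3.trans part4, part5⟩
end
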